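/- (Counting squares and cubes.) For N ≥ 1 let c(N) be the number of distinct words of the form ωω (ω a nonempty finite word) that have an occurrence in D∞ starting at some position in {1, …, N}. Then for every N ≥ 1: c(N+1) − c(N) = 1 if there exists m ≥ 1 with 2^m ≤ N < 3·2^{m−1}, and c(N+1) − c(N) = 0 otherwise (in particular for 3·2^{m−1} ≤ N < 2^{m+1}). Moreover, the number of distinct words of the form ωωω (ω nonempty) having an occurrence starting in {1, …, N} also equals c(N). -/

import Mathlib

namespace PD

/-- The period-doubling substitution on the alphabet `Bool`,
where `false` stands for the letter `a` and `true` for the letter `b`: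
`σ(a) = ab`, `σ(b) = aa`. -/
def sub : Bool → List Bool
  | false => [false, true]
  | true  => [false, false]

/-- The substitution applied to a finite word. -/
def subW (w : List Bool) : List Bool := w.flatMap sub

/-- `A m = σ^m(a)`. -/
def A (m : ℕ) : List Bool := subW^[m] [false]

/-- `B m = σ^m(b)`. -/
def B (m : ℕ) : List Bool := subW^[m] [true]

/-- The doubling sequence `D∞` (0-indexed: `D n` is the `(n+1)`-th letter),
the fixed point of `σ` beginning with `a`; `A m` is a prefix of `A (m+1)`,
and `A (n+1)` has length `2^(n+1) > n`. -/
def D (n : ℕ) : Bool := (A (n + 1)).getD n false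

/-- `δ m`, the last letter of `A m`. -/
def delta (m : ℕ) : Bool := (A m).getLastD false

/-- The envelope words (`i ∈ {1,2}`): `E m 1 = A m` minus its last letter,
`E m 2 = A (m-1) ++ (A m` minus its last letter `)`. -/
def E (m i : ℕ) : List Bool :=
  if i = 1 then (A m).dropLast else A (m - 1) ++ (A m).dropLast

/-- `w` occurs at the (1-indexed) position `j` in the finite word `τ`. -/
def OccursIn (w τ : List Bool) (j : ℕ) : Prop :=
  1 ≤ j ∧ (τ.drop (j - 1)).take w.length = w

/-- `w` occurs at the (1-indexed) position `j` in the doubling sequence. -/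
def OccursD (w : List Bool) (j : ℕ) : Prop :=
  1 ≤ j ∧ ∀ k < w.length, D (j - 1 + k) = w.getD k false

/-- `w` is a factor of the doubling sequence. -/
def FactorD (w : List Bool) : Prop := ∃ j, OccursD w j

/-- `L w p`: the (1-indexed) starting position of the `p`-th occurrence of `w`
in the doubling sequence, occurrences being ordered by starting position.
(Each factor occurs infinitely often, so `Nat.nth` enumerates all occurrences
in increasing order.) -/
noncomputable def L (w : List Bool) (p : ℕ) : ℕ := Nat.nth (OccursD w) (p - 1)

/-- The strict total order on envelope words:
`E m₁ i₁ ⊏ E m₂ i₂` iff `m₁ < m₂`, or `m₁ = m₂` and `i₁ < i₂`. -/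
def EnvLt (m₁ i₁ m₂ i₂ : ℕ) : Prop := m₁ < m₂ ∨ (m₁ = m₂ ∧ i₁ < i₂)

/-- `Env(w) = E m i`: the envelope word `E m i` is the `⊏`-minimal envelope
word containing `w` as a factor. -/
def IsEnv (w : List Bool) (m i : ℕ) : Prop :=
  1 ≤ m ∧ (i = 1 ∨ i = 2) ∧ w <:+: E m i ∧
    ∀ m' i', 1 ≤ m' → (i' = 1 ∨ i' = 2) → EnvLt m' i' m i → ¬ w <:+: E m' i'

/-- The substitution `φ₁(a) = a`, `φ₁(b) = bb`. -/
def phi1 : Bool → List Bool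
  | false => [false]
  | true  => [true, true]

/-- `Θ₁ = φ₁(D∞)` (0-indexed): `φ₁(A (n+1))` is a prefix of `Θ₁` of length `> n`. -/
def Theta1 (n : ℕ) : Bool := ((A (n + 1)).flatMap phi1).getD n false

/-- The substitution `φ₂(a) = ab`, `φ₂(b) = acac`, over the alphabet `Fin 3`
where `0` stands for `a`, `1` for `b` and `2` for `c`. -/
def phi2 : Bool → List (Fin 3)
  | false => [0, 1]
  | true  => [0, 2, 0, 2]

/-- `Θ₂ = φ₂(D∞)` (0-indexed). -/
def Theta2 (n : ℕ) : Fin 3 := ((A (n + 1)).flatMap phi2).getD n 0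

/-- `N₁(x,p)`: the number of letters `x` among the first `p` letters of `Θ₁`. -/
def N1 (x : Bool) (p : ℕ) : ℕ := ((List.range p).map Theta1).count x

/-- `N₂(x,p)`: the number of letters `x` among the first `p` letters of `Θ₂`. -/
def N2 (x : Fin 3) (p : ℕ) : ℕ := ((List.range p).map Theta2).count x


-- ===== auxiliary development =====
lemma A_succ (n : ℕ) : A (n+1) = subW (A n) := Function.iterate_succ_apply' _ _ _

lemma subW_append (x y : List Bool) : subW (x ++ y) = subW x ++ subW y :=
  List.flatMap_append ..

lemma iter_append (n : ℕ) (x y : List Bool) :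
    subW^[n] (x ++ y) = subW^[n] x ++ subW^[n] y := by
  induction n generalizing x y with
  | zero => simp
  | succ n ih => simp [Function.iterate_succ_apply, subW_append, ih]

lemma A_eq (n : ℕ) : A (n+1) = A n ++ B n := by
  have : A (n+1) = subW^[n] (subW [false]) := Function.iterate_succ_apply _ _ _
  rw [this]
  show subW^[n] ([false] ++ [true]) = _
  rw [iter_append]; rfl

lemma length_subW (w : List Bool) : (subW w).length = 2 * w.length := by
  induction w with
  | nil => rfl
  | cons x w ih =>
    simp only [subW, List.flatMap_cons, List.length_append] at *
    cases x <;> simp [sub, ih] <;> ring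

lemma length_A (n : ℕ) : (A n).length = 2^n := by
  induction n with
  | zero => rfl
  | succ n ih => rw [A_succ, length_subW, ih, pow_succ]; ring

lemma A_prefix (n : ℕ) : A n <+: A (n+1) := ⟨B n, (A_eq n).symm⟩

lemma A_prefix_le {m m' : ℕ} (h : m ≤ m') : A m <+: A m' := by
  induction h with
  | refl => exact List.prefix_rfl
  | step _ ih => exact ih.trans (A_prefix _)

lemma subW_getD_even (w : List Bool) (i : ℕ) : (subW w).getD (2*i) false = false := by
  induction w generalizing i with
  | nil => rfl
  | cons x w ih =>
    cases i with
    | zero => cases x <;> rfl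
    | succ i =>
      have h2 : 2*(i+1) = (2*i)+1+1 := by ring
      cases x <;> simp only [subW, List.flatMap_cons, sub] <;>
        simpa [h2, subW] using ih i

lemma subW_getD_odd (w : List Bool) (i : ℕ) (h : i < w.length) :
    (subW w).getD (2*i+1) false = !(w.getD i false) := by
  induction w generalizing i with
  | nil => simp at h
  | cons x w ih =>
    cases i with
    | zero => cases x <;> rfl
    | succ i =>
      have h' : i < w.length := by simpa using h
      have h2 : 2*(i+1)+1 = (2*i+1)+1+1 := by ring
      cases x <;> simp only [subW, List.flatMap_cons, sub] <;>
        simpa [h2, subW] using ih i h'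

lemma getD_prefix {w v : List Bool} (h : w <+: v) {n : ℕ} (hn : n < w.length) :
    v.getD n false = w.getD n false := by
  obtain ⟨t, rfl⟩ := h
  exact List.getD_append _ _ _ _ hn

lemma A_getD {n m : ℕ} (h : n < 2^m) : (A m).getD n false = D n := by
  have hn : n < 2^(n+1) := lt_of_lt_of_le (Nat.lt_two_pow_self (n := n)) (Nat.pow_le_pow_right (by norm_num) (by omega))
  rcases le_total m (n+1) with hle | hle
  · rw [D, getD_prefix (A_prefix_le hle) (by rw [length_A]; exact h)]
  · rw [D, getD_prefix (A_prefix_le hle) (by rw [length_A]; exact hn)]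

lemma D_even (n : ℕ) : D (2*n) = false := by
  rw [D, A_succ]; exact subW_getD_even _ n

lemma D_odd (n : ℕ) : D (2*n+1) = !D n := by
  have hn : n < 2^(2*n+1) := lt_of_lt_of_le (Nat.lt_two_pow_self (n := n)) (Nat.pow_le_pow_right (by norm_num) (by omega))
  have : (2:ℕ)*n+1+1 = (2*n+1)+1 := by ring
  rw [D, this, A_succ, subW_getD_odd _ n (by rw [length_A]; exact hn), A_getD hn]

lemma D_zero : D 0 = false := D_even 0
lemma D_one : D 1 = true := by have := D_odd 0; simp [D_zero] at this; simpa using this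


lemma parity (n : ℕ) : ∃ k, n = 2*k ∨ n = 2*k+1 := ⟨n/2, by omega⟩

lemma D_even' {n : ℕ} (h : n % 2 = 0) : D n = false := by
  obtain ⟨k, rfl⟩ : ∃ k, n = 2*k := ⟨n/2, by omega⟩
  exact D_even k

lemma D_even2 {n : ℕ} (k : ℕ) (h : n = 2*k) : D n = false := by subst h; exact D_even k

lemma D_odd' {n k : ℕ} (h : n = 2*k+1) : D n = !D k := by subst h; exact D_odd k


lemma bool_not_inj {a b : Bool} (h : (!a) = (!b)) : a = b := by
  cases a <;> cases b <;> simp_all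

lemma D_even_congr {a b : ℕ} (x y : ℕ) (ha : a = 2*x) (hb : b = 2*y) : D a = D b := by
  rw [D_even2 x ha, D_even2 y hb]

lemma D_odd_congr {a b x y : ℕ} (ha : a = 2*x+1) (hb : b = 2*y+1) (h : D x = D y) :
    D a = D b := by rw [D_odd' ha, D_odd' hb, h]

lemma D_odd_eq {a b x y : ℕ} (ha : a = 2*x+1) (hb : b = 2*y+1) (h : D a = D b) :
    D x = D y := by rw [D_odd' ha, D_odd' hb] at h; exact bool_not_inj h

lemma D_two : D 2 = false := D_even' (by norm_num)
lemma D_three : D 3 = false := by rw [D_odd' (k := 1) (by norm_num), D_one]; rfl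
lemma D_four : D 4 = false := D_even' (by norm_num)
lemma D_five : D 5 = true := by rw [D_odd' (k := 2) (by norm_num), D_two]; rfl


lemma no_bb (n : ℕ) (h1 : D n = true) (h2 : D (n+1) = true) : False := by
  rcases Nat.mod_two_eq_zero_or_one n with h | h
  · rw [D_even' h] at h1; exact absurd h1 (by simp)
  · rw [D_even' (by omega)] at h2; exact absurd h2 (by simp)

/-- a square of half-length `q` occurs at 0-indexed position `t`. -/
def Per (q t : ℕ) : Prop := ∀ i < q, D (t+i) = D (t+q+i)

lemma per_one {t : ℕ} : Per 1 t ↔ D (t/2) = true := by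
  obtain ⟨k, hk | hk⟩ := parity t
  all_goals subst hk
  · have hdiv : 2*k/2 = k := by omega
    have a1 : D (2*k) = false := D_even k
    have a2 : D (2*k+1) = !D k := D_odd' rfl
    rw [hdiv]
    constructor
    · intro h
      have h0 := h 0 (by norm_num)
      simp only [Nat.add_zero] at h0
      rw [a1, a2] at h0
      revert h0; cases D k <;> simp
    · intro h i hi
      interval_cases i
      simp only [Nat.add_zero]
      rw [a1, a2, h]; rfl
  · have hdiv : (2*k+1)/2 = k := by omega
    have a1 : D (2*k+1) = !D k := D_odd' rfl
    have a2 : D (2*k+1+1) = false := D_even2 (k+1) (by ring)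
    rw [hdiv]
    constructor
    · intro h
      have h0 := h 0 (by norm_num)
      simp only [Nat.add_zero] at h0
      rw [a1, a2] at h0
      revert h0; cases D k <;> simp
    · intro h i hi
      interval_cases i
      simp only [Nat.add_zero]
      rw [a1, a2, h]; rfl

lemma per_all_false {q t : ℕ} (hq : q % 2 = 1) (h : Per q t) :
    ∀ j, t ≤ j → j < t + 2*q → D j = false := by
  intro j hj1 hj2
  rcases Nat.mod_two_eq_zero_or_one j with hje | hjo
  · exact D_even' hje
  · rcases lt_or_ge j (t+q) with hlt | hge
    · have h2 := h (j - t) (by omega)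
      have e1 : t + (j-t) = j := by omega
      have e2 : t + q + (j - t) = j + q := by omega
      rw [e1, e2] at h2
      rw [h2]; exact D_even' (by omega)
    · have h2 := h (j - t - q) (by omega)
      have e1 : t + (j-t-q) = j - q := by omega
      have e2 : t + q + (j-t-q) = j := by omega
      rw [e1, e2] at h2
      rw [← h2]; exact D_even' (by omega)

lemma per_odd {q t : ℕ} (hq : q % 2 = 1) (h3 : 3 ≤ q) (h : Per q t) : False := by
  have hall := per_all_false hq h
  obtain ⟨k, hk⟩ : ∃ k, t ≤ 2*k+1 ∧ 2*k+3 < t + 2*q := ⟨t/2, by omega⟩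
  have h1 : D (2*k+1) = false := hall _ (by omega) (by omega)
  have h2 : D (2*k+3) = false := hall _ (by omega) (by omega)
  rw [D_odd' (k := k) rfl] at h1
  rw [D_odd' (k := k+1) (by ring)] at h2
  exact no_bb k (by revert h1; cases D k <;> simp) (by revert h2; cases D (k+1) <;> simp)

lemma per_half {q t : ℕ} (hq : 1 ≤ q) : Per (2*q) t ↔ Per q (t/2) := by
  obtain ⟨m, hm | hm⟩ := parity t
  all_goals subst hm
  · have hdiv : 2*m/2 = m := by omega
    rw [hdiv]
    constructor
    · intro h i hi
      exact D_odd_eq (x := m+i) (y := m+q+i) (by ring) (by ring) (h (2*i+1) (by omega))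
    · intro h i hi
      obtain ⟨c, hc | hc⟩ := parity i
      · exact D_even_congr (m+c) (m+q+c) (by omega) (by omega)
      · subst hc
        exact D_odd_congr (x := m+c) (y := m+q+c) (by ring) (by ring) (h c (by omega))
  · have hdiv : (2*m+1)/2 = m := by omega
    rw [hdiv]
    constructor
    · intro h i hi
      exact D_odd_eq (x := m+i) (y := m+q+i) (by ring) (by ring) (h (2*i) (by omega))
    · intro h i hi
      obtain ⟨c, hc | hc⟩ := parity i
      · subst hc
        exact D_odd_congr (x := m+c) (y := m+q+c) (by ring) (by ring) (h c (by omega))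
      · exact D_even_congr (m+c+1) (m+q+c+1) (by omega) (by omega)

lemma per_char : ∀ q t : ℕ, 1 ≤ q → Per q t →
    ∃ e, q = 2^e ∧ D (t / 2^(e+1)) = true := by
  intro q
  induction q using Nat.strong_induction_on with
  | _ q ih =>
    intro t hq hper
    obtain ⟨q', hq' | hq'⟩ := parity q
    · subst hq'
      have hq1 : 1 ≤ q' := by omega
      obtain ⟨e, he1, he2⟩ := ih q' (by omega) (t/2) hq1 ((per_half hq1).mp hper)
      refine ⟨e+1, by rw [he1]; ring, ?_⟩
      rw [Nat.div_div_eq_div_mul] at he2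
      rw [show (2:ℕ)^(e+1+1) = 2 * 2^(e+1) from by ring]
      exact he2
    · subst hq'
      rcases Nat.lt_or_ge q' 1 with hlt | hge
      · have : q' = 0 := by omega
        subst this
        exact ⟨0, rfl, per_one.mp hper⟩
      · exact absurd hper (fun h => per_odd (by omega) (by omega) h)

lemma L_pref : ∀ e : ℕ, ∀ s < 2^e, D (2^(e+1) + s) = D s := by
  intro e
  induction e with
  | zero =>
    intro s hs
    have : s = 0 := by omega
    subst this
    rw [show (2:ℕ)^(0+1) + 0 = 2 from by norm_num, D_two, D_zero]
  | succ e ih =>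
    have e1 : (2:ℕ)^(e+1) = 2*2^e := by ring
    have e2 : (2:ℕ)^(e+1+1) = 4*2^e := by ring
    intro s hs
    obtain ⟨u, hu | hu⟩ := parity s
    all_goals subst hu
    · rw [D_even2 (2^(e+1)+u) (by ring), D_even]
    · rw [D_odd' (k := 2^(e+1) + u) (by ring), D_odd, ih u (by omega)]

lemma L_per : ∀ e : ℕ, ∀ r, r + 1 < 3*2^e → D (2^(e+1) + r) = D (2^(e+1) + 2^e + r) := by
  intro e
  induction e with
  | zero =>
    intro r hr
    have hr' : r < 2 := by norm_num at hr; omega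
    interval_cases r
    · rw [show (2:ℕ)^(0+1) + 0 = 2 from by norm_num,
        show (2:ℕ)^(0+1) + 2^0 + 0 = 3 from by norm_num, D_two, D_three]
    · rw [show (2:ℕ)^(0+1) + 1 = 3 from by norm_num,
        show (2:ℕ)^(0+1) + 2^0 + 1 = 4 from by norm_num, D_three, D_four]
  | succ e ih =>
    have e1 : (2:ℕ)^(e+1) = 2*2^e := by ring
    have e2 : (2:ℕ)^(e+1+1) = 4*2^e := by ring
    intro r hr
    obtain ⟨u, hu | hu⟩ := parity r
    all_goals subst hu
    · exact D_even_congr (2^(e+1)+u) (2^(e+1)+2^e+u)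
        (by simp only [e1, e2]; ring) (by simp only [e1, e2]; ring)
    · exact D_odd_congr (x := 2^(e+1)+u) (y := 2^(e+1)+2^e+u)
        (by simp only [e1, e2]; ring) (by simp only [e1, e2]; ring) (ih u (by omega))

lemma L_block : ∀ e n r : ℕ, D n = true → r < 4*2^e →
    D (2^(e+1)*n + r) = D (2^(e+1) + r) := by
  intro e
  induction e with
  | zero =>
    intro n r hn hr
    have hr' : r < 4 := by norm_num at hr; omega
    interval_cases r
    · exact D_even_congr n 1 (by ring) (by norm_num)
    · rw [show (2:ℕ)^(0+1)*n + 1 = 2*n+1 from by ring,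
        show (2:ℕ)^(0+1) + 1 = 3 from by norm_num, D_odd, hn, D_three]; rfl
    · exact D_even_congr (n+1) 2 (by ring) (by norm_num)
    · obtain ⟨k, hk | hk⟩ := parity n
      · rw [hk, D_even] at hn; exact absurd hn (by simp)
      · subst hk
        rw [show (2:ℕ)^(0+1)*(2*k+1) + 3 = 2*(2*k+2)+1 from by ring, D_odd,
          D_even2 (n := 2*k+2) (k+1) (by ring),
          show (2:ℕ)^(0+1) + 3 = 5 from by norm_num, D_five]; rfl
  | succ e ih =>
    have e1 : (2:ℕ)^(e+1) = 2*2^e := by ring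
    have e2 : (2:ℕ)^(e+1+1) = 4*2^e := by ring
    intro n r hn hr
    obtain ⟨u, hu | hu⟩ := parity r
    all_goals subst hu
    · exact D_even_congr (2^(e+1)*n+u) (2^(e+1)+u)
        (by simp only [e1, e2]; ring) (by simp only [e1, e2]; ring)
    · exact D_odd_congr (x := 2^(e+1)*n+u) (y := 2^(e+1)+u)
        (by simp only [e1, e2]; ring) (by simp only [e1, e2]; ring)
        (ih n u hn (by omega))

lemma L_Dmod (e : ℕ) : ∀ s, s < 3*2^e → D (2^(e+1)+s) = D (s % 2^e) := by
  intro s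
  induction s using Nat.strong_induction_on with
  | _ s ihs =>
    intro hs
    have hp : (0:ℕ) < 2^e := pow_pos (by norm_num) e
    rcases lt_or_ge s (2^e) with h | h
    · rw [Nat.mod_eq_of_lt h]; exact L_pref e s h
    · have key := L_per e (s - 2^e) (by omega)
      have e3 : 2^(e+1) + 2^e + (s - 2^e) = 2^(e+1) + s := by omega
      rw [e3] at key
      rw [← key, ihs (s - 2^e) (by omega) (by omega), ← Nat.mod_eq_sub_mod h]

lemma rot : ∀ e δ : ℕ, 0 < δ → δ < 2^e →
    (∀ s, s < 2^e → D s = D ((s+δ) % 2^e)) → False := by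
  intro e
  induction e with
  | zero => intro δ h1 h2 _; norm_num at h2; omega
  | succ e ih =>
    have e1 : (2:ℕ)^(e+1) = 2*2^e := by ring
    have hp : (0:ℕ) < 2^e := pow_pos (by norm_num) e
    intro δ h1 h2 H
    obtain ⟨d, hd | hd⟩ := parity δ
    · -- δ = 2d even, d ≥ 1
      subst hd
      refine ih d (by omega) (by omega) ?_
      intro u hu
      have h3 := H (2*u+1) (by omega)
      have key : (2*(u+d)+1) % 2^(e+1) = 2*((u+d) % 2^e)+1 := by
        conv_lhs => rw [← Nat.div_add_mod (u+d) (2^e)]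
        rw [show 2*(2^e*((u+d)/2^e) + (u+d) % 2^e)+1
            = (2*((u+d) % 2^e)+1) + 2^(e+1)*((u+d)/2^e) from by rw [e1]; ring,
          Nat.add_mul_mod_self_left]
        exact Nat.mod_eq_of_lt (by have := Nat.mod_lt (u+d) hp; omega)
      rw [show 2*u+1+2*d = 2*(u+d)+1 from by ring, key,
        D_odd' (k := u) rfl, D_odd' (k := (u+d) % 2^e) rfl] at h3
      exact bool_not_inj h3
    · -- δ odd: every letter in [0, 2^(e+1)) is false, contradicting D 1 = true
      have hall : ∀ s, s < 2^(e+1) → D s = false := by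
        intro s hs
        obtain ⟨c, hc | hc⟩ := parity s
        · exact D_even' (by omega)
        · rcases le_or_gt δ s with hds | hds
          · have h3 := H (s - δ) (by omega)
            rw [Nat.mod_eq_of_lt (by omega), show s - δ + δ = s from by omega] at h3
            rw [← h3]; exact D_even' (by omega)
          · have h3 := H (s + 2^(e+1) - δ) (by omega)
            rw [show s + 2^(e+1) - δ + δ = s + 2^(e+1) from by omega,
              Nat.add_mod_right, Nat.mod_eq_of_lt (by omega)] at h3
            rw [← h3]; exact D_even' (by omega)
      have := hall 1 (by omega)
      rw [D_one] at this; exact absurd this (by simp)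


noncomputable def sqW (e o : ℕ) : List Bool := (List.range (2*2^e)).map (fun i => D (2^(e+1)+o+i))

/-- canonical cube word. -/
noncomputable def cbW (e o : ℕ) : List Bool := (List.range (3*2^e)).map (fun i => D (2^(e+1)+o+i))

lemma getD_map_range {n k : ℕ} (f : ℕ → Bool) (h : k < n) :
    ((List.range n).map f).getD k false = f k := by
  rw [List.getD_eq_getElem _ _ (by simpa using h), List.getElem_map, List.getElem_range]

lemma length_sqW (e o : ℕ) : (sqW e o).length = 2*2^e := by simp [sqW]
lemma length_cbW (e o : ℕ) : (cbW e o).length = 3*2^e := by simp [cbW]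

lemma sqW_getD {e o k : ℕ} (h : k < 2*2^e) :
    (sqW e o).getD k false = D (2^(e+1)+o+k) := getD_map_range _ h

lemma cbW_getD {e o k : ℕ} (h : k < 3*2^e) :
    (cbW e o).getD k false = D (2^(e+1)+o+k) := getD_map_range _ h

lemma hpow_pos (e : ℕ) : (0:ℕ) < 2^e := pow_pos (by norm_num) e

/-- the basic period transfer: `D (2^(e+1)+o+(2^e + i)) = D (2^(e+1)+o+i)`. -/
lemma per_shift {e o i : ℕ} (h : o + i + 1 < 3*2^e) :
    D (2^(e+1)+o+(2^e+i)) = D (2^(e+1)+o+i) := by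
  have := L_per e (o+i) h
  have e3 : 2^(e+1) + 2^e + (o+i) = 2^(e+1)+o+(2^e+i) := by omega
  have e4 : 2^(e+1) + (o+i) = 2^(e+1)+o+i := by omega
  rw [e3, e4] at this
  exact this.symm

lemma sqW_is_square {e o : ℕ} (ho : o < 2^e) :
    ∃ w : List Bool, w ≠ [] ∧ sqW e o = w ++ w := by
  refine ⟨(List.range (2^e)).map (fun i => D (2^(e+1)+o+i)), by
    intro hnil
    have := congrArg List.length hnil
    simp only [List.length_map, List.length_range, List.length_nil] at this
    have := hpow_pos e; omega, ?_⟩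
  have h2 : 2*2^e = 2^e + 2^e := by ring
  rw [sqW, h2, List.range_add, List.map_append, List.map_map]
  congr 1
  refine List.map_congr_left ?_
  intro i hi
  simp only [List.mem_range] at hi
  simp only [Function.comp_apply]
  exact per_shift (by omega)

lemma cbW_is_cube {e o : ℕ} (ho : o < 2^e) :
    ∃ w : List Bool, w ≠ [] ∧ cbW e o = w ++ w ++ w := by
  refine ⟨(List.range (2^e)).map (fun i => D (2^(e+1)+o+i)), by
    intro hnil
    have := congrArg List.length hnil
    simp only [List.length_map, List.length_range, List.length_nil] at this
    have := hpow_pos e; omega, ?_⟩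
  have h2 : 3*2^e = 2^e + 2^e + 2^e := by ring
  rw [cbW, h2, List.range_add, List.range_add, List.map_append, List.map_append,
    List.map_map, List.map_map]
  congr 1
  · congr 1
    refine List.map_congr_left ?_
    intro i hi
    simp only [List.mem_range] at hi
    simp only [Function.comp_apply]
    exact per_shift (by omega)
  · refine List.map_congr_left ?_
    intro i hi
    simp only [List.mem_range] at hi
    simp only [Function.comp_apply]
    calc D (2^(e+1)+o+(2^e+2^e+i)) = D (2^(e+1)+o+(2^e+(2^e+i))) := congrArg D (by omega)
      _ = D (2^(e+1)+o+(2^e+i)) := per_shift (by omega)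
      _ = D (2^(e+1)+o+i) := per_shift (by omega)

lemma sqW_occurs {e o : ℕ} (ho : o < 2^e) : OccursD (sqW e o) (2^(e+1)+o+1) := by
  refine ⟨by omega, ?_⟩
  intro k hk
  rw [length_sqW] at hk
  have e1 : 2^(e+1)+o+1-1+k = 2^(e+1)+o+k := by omega
  rw [e1, sqW_getD hk]

lemma cbW_occurs {e o : ℕ} (ho : o < 2^e) : OccursD (cbW e o) (2^(e+1)+o+1) := by
  refine ⟨by omega, ?_⟩
  intro k hk
  rw [length_cbW] at hk
  have e1 : 2^(e+1)+o+1-1+k = 2^(e+1)+o+k := by omega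
  rw [e1, cbW_getD hk]

/-- Extraction: any occurrence of a square determines `(e, o)`. -/
lemma occ_square {w : List Bool} (hw : w ≠ []) {j : ℕ} (h : OccursD (w ++ w) j) :
    ∃ e o, o < 2^e ∧ 2^(e+1)+o+1 ≤ j ∧ w ++ w = sqW e o := by
  obtain ⟨hj, hocc⟩ := h
  set ℓ := w.length with hℓdef
  have hℓ : 1 ≤ ℓ := by
    rw [hℓdef]; exact List.length_pos_iff.mpr hw
  set t := j - 1 with ht
  have hlen : (w ++ w).length = ℓ + ℓ := by simp [hℓdef]
  have hocc' : ∀ k < ℓ + ℓ, D (t + k) = (w ++ w).getD k false := by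
    intro k hk; exact hocc k (by rw [hlen]; exact hk)
  have hper : Per ℓ t := by
    intro i hi
    have h1 := hocc' i (by omega)
    have h2 := hocc' (ℓ + i) (by omega)
    have e1 : (w ++ w).getD i false = w.getD i false :=
      List.getD_append _ _ _ _ (by omega)
    have e2 : (w ++ w).getD (ℓ + i) false = w.getD i false := by
      rw [List.getD_append_right _ _ _ _ (by omega)]
      congr 1; omega
    rw [e1] at h1
    rw [e2] at h2
    have e3 : t + ℓ + i = t + (ℓ + i) := by omega
    rw [e3, h2, ← h1]
  obtain ⟨e, hℓe, hD⟩ := per_char ℓ t hℓ hper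
  set n := t / 2^(e+1) with hn
  set o0 := t % 2^(e+1) with ho0
  have e1 : (2:ℕ)^(e+1) = 2*2^e := by ring
  have hsplit : 2^(e+1) * n + o0 = t := Nat.div_add_mod t (2^(e+1))
  have ho0lt : o0 < 2^(e+1) := Nat.mod_lt _ (hpow_pos (e+1))
  have hn1 : 1 ≤ n := by
    rcases Nat.eq_zero_or_pos n with h0 | h0
    · rw [h0] at hD; rw [D_zero] at hD; exact absurd hD (by simp)
    · exact h0
  have hX : 2^(e+1) ≤ 2^(e+1) * n := Nat.le_mul_of_pos_right _ (by omega)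
  set o := o0 % 2^e with ho
  have holt : o < 2^e := Nat.mod_lt _ (hpow_pos e)
  have hole : o ≤ o0 := Nat.mod_le _ _
  refine ⟨e, o, holt, by omega, ?_⟩
  -- key pointwise identity
  have key : ∀ k < 2*2^e, D (t + k) = D (2^(e+1)+o+k) := by
    intro k hk
    have b1 : D (t+k) = D (2^(e+1)*n + (o0+k)) := congrArg D (by omega)
    have b2 := L_block e n (o0+k) hD (by omega)
    rcases lt_or_ge o0 (2^e) with hc | hc
    · have : o = o0 := by rw [ho]; exact Nat.mod_eq_of_lt hc
      rw [b1, b2]; exact congrArg D (by omega)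
    · have hoeq : o = o0 - 2^e := by
        rw [ho, Nat.mod_eq_sub_mod hc]; exact Nat.mod_eq_of_lt (by omega)
      have b3 := L_per e (o0 - 2^e + k) (by omega)
      have e4 : 2^(e+1) + 2^e + (o0 - 2^e + k) = 2^(e+1) + (o0 + k) := by omega
      rw [e4] at b3
      rw [b1, b2, ← b3]
      exact congrArg D (by omega)
  refine List.ext_getElem (by rw [hlen, length_sqW]; omega) ?_
  intro k h1 h2
  have hk : k < 2*2^e := by rw [length_sqW] at h2; exact h2
  rw [← List.getD_eq_getElem _ false h1, ← List.getD_eq_getElem _ false h2,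
    ← hocc' k (by omega), sqW_getD hk, key k hk]

lemma take_cbW (e o : ℕ) : (cbW e o).take (2*2^e) = sqW e o := by
  rw [cbW, sqW, ← List.map_take, List.take_range]
  congr 2
  omega

/-- Extraction for cubes. -/
lemma occ_cube {w : List Bool} (hw : w ≠ []) {j : ℕ} (h : OccursD (w ++ w ++ w) j) :
    ∃ e o, o < 2^e ∧ 2^(e+1)+o+1 ≤ j ∧ w ++ w ++ w = cbW e o := by
  obtain ⟨hj, hocc⟩ := h
  set ℓ := w.length with hℓdef
  have hℓ : 1 ≤ ℓ := by rw [hℓdef]; exact List.length_pos_iff.mpr hw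
  have hlen2 : (w ++ w).length = ℓ + ℓ := by simp [hℓdef]
  have hlen3 : (w ++ w ++ w).length = ℓ + ℓ + ℓ := by simp [hℓdef]; omega
  have hsq : OccursD (w ++ w) j := by
    refine ⟨hj, ?_⟩
    intro k hk
    rw [hlen2] at hk
    have := hocc k (by rw [hlen3]; omega)
    rw [List.getD_append _ _ _ _ (by omega)] at this
    exact this
  obtain ⟨e, o, holt, hpos, heq2⟩ := occ_square hw hsq
  have hℓe : ℓ = 2^e := by
    have := congrArg List.length heq2
    rw [hlen2, length_sqW] at this
    omega
  refine ⟨e, o, holt, hpos, ?_⟩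
  have hocc' : ∀ k < ℓ+ℓ+ℓ, D (j-1+k) = (w++w++w).getD k false := by
    intro k hk; exact hocc k (by rw [hlen3]; exact hk)
  have sq_getD : ∀ k < ℓ+ℓ, (w++w).getD k false = D (2^(e+1)+o+k) := by
    intro k hk
    rw [heq2, sqW_getD (by omega)]
  refine List.ext_getElem (by rw [hlen3, length_cbW]; omega) ?_
  intro k h1 h2
  rw [← List.getD_eq_getElem _ false h1, ← List.getD_eq_getElem _ false h2,
    cbW_getD (by rw [length_cbW] at h2; exact h2)]
  rw [hlen3] at h1
  rcases lt_or_ge k (ℓ+ℓ) with hc | hc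
  · rw [List.getD_append _ _ _ _ (by omega), sq_getD k hc]
  · -- third block
    have b1 : (w++w++w).getD k false = w.getD (k - (ℓ+ℓ)) false := by
      rw [List.getD_append_right _ _ _ _ (by omega)]
      congr 1; omega
    have b2 : w.getD (k-(ℓ+ℓ)) false = (w++w).getD (k-(ℓ+ℓ)) false :=
      (List.getD_append _ _ _ _ (by omega)).symm
    rw [b1, b2, sq_getD _ (by omega)]
    -- D (2^(e+1)+o+(k-2·2^e)) = D (2^(e+1)+o+k)
    have s1 : D (2^(e+1)+o+(2^e+(k-(ℓ+ℓ)))) = D (2^(e+1)+o+(k-(ℓ+ℓ))) :=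
      per_shift (by omega)
    have s2 : D (2^(e+1)+o+(2^e+(2^e+(k-(ℓ+ℓ))))) = D (2^(e+1)+o+(2^e+(k-(ℓ+ℓ)))) :=
      per_shift (by omega)
    have e5 : 2^(e+1)+o+(2^e+(2^e+(k-(ℓ+ℓ)))) = 2^(e+1)+o+k := by omega
    rw [e5] at s2
    rw [s2, s1]

/-- distinct offsets give distinct square words. -/
lemma sqW_ptwise_ne {e o1 o2 : ℕ} (h12 : o1 < o2) (h2 : o2 < 2^e)
    (H : ∀ k < 2*2^e, D (2^(e+1)+o1+k) = D (2^(e+1)+o2+k)) : False := by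
  have hp := hpow_pos e
  set δ := o2 - o1 with hδ
  refine rot e δ (by omega) (by omega) ?_
  intro s hs
  rcases le_or_gt o1 s with hc | hc
  · have hh := H (s - o1) (by omega)
    have a1 : 2^(e+1)+o1+(s-o1) = 2^(e+1) + s := by omega
    have a2 : 2^(e+1)+o2+(s-o1) = 2^(e+1) + (s + δ) := by omega
    rw [a1, a2, L_Dmod e s (by omega), L_Dmod e (s+δ) (by omega),
      Nat.mod_eq_of_lt hs] at hh
    exact hh
  · have hh := H (s + 2^e - o1) (by omega)
    have a1 : 2^(e+1)+o1+(s+2^e-o1) = 2^(e+1) + (s + 2^e) := by omega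
    have a2 : 2^(e+1)+o2+(s+2^e-o1) = 2^(e+1) + (s + δ + 2^e) := by omega
    rw [a1, a2, L_Dmod e (s+2^e) (by omega), L_Dmod e (s+δ+2^e) (by omega),
      Nat.add_mod_right, Nat.add_mod_right, Nat.mod_eq_of_lt hs] at hh
    exact hh

lemma sqW_inj {e1 o1 e2 o2 : ℕ} (h1 : o1 < 2^e1) (h2 : o2 < 2^e2)
    (heq : sqW e1 o1 = sqW e2 o2) : e1 = e2 ∧ o1 = o2 := by
  have hlen := congrArg List.length heq
  rw [length_sqW, length_sqW] at hlen
  have he : e1 = e2 := Nat.pow_right_injective (le_refl 2)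
    (show (2:ℕ)^e1 = 2^e2 by omega)
  subst he
  refine ⟨rfl, ?_⟩
  by_contra hne
  have hpt : ∀ k < 2*2^e1, D (2^(e1+1)+o1+k) = D (2^(e1+1)+o2+k) := by
    intro k hk
    rw [← sqW_getD (o := o1) hk, ← sqW_getD (o := o2) hk, heq]
  rcases lt_or_gt_of_ne hne with hlt | hgt
  · exact sqW_ptwise_ne hlt h2 hpt
  · exact sqW_ptwise_ne hgt h1 (fun k hk => (hpt k hk).symm)

lemma cbW_inj {e1 o1 e2 o2 : ℕ} (h1 : o1 < 2^e1) (h2 : o2 < 2^e2)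
    (heq : cbW e1 o1 = cbW e2 o2) : e1 = e2 ∧ o1 = o2 := by
  have hlen := congrArg List.length heq
  rw [length_cbW, length_cbW] at hlen
  have he : e1 = e2 := Nat.pow_right_injective (le_refl 2)
    (show (2:ℕ)^e1 = 2^e2 by omega)
  subst he
  have := congrArg (List.take (2*2^e1)) heq
  rw [take_cbW, take_cbW] at this
  exact sqW_inj h1 h2 this



def Domain (N : ℕ) : Set (ℕ × ℕ) := {p | p.2 < 2^p.1 ∧ 2^(p.1+1) + p.2 + 1 ≤ N}

lemma Domain_finite (N : ℕ) : (Domain N).Finite := by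
  apply Set.Finite.subset ((Set.finite_Iio N).prod (Set.finite_Iio N))
  rintro ⟨e, o⟩ ⟨h1, h2⟩
  have h1' : o < 2^e := h1
  have h2' : 2^(e+1)+o+1 ≤ N := h2
  have he : e < 2^e := Nat.lt_two_pow_self (n := e)
  have hee : (2:ℕ)^e ≤ 2^(e+1) := Nat.pow_le_pow_right (by norm_num) (by omega)
  exact ⟨by simp only [Set.mem_Iio]; omega, by simp only [Set.mem_Iio]; omega⟩

lemma sq_set_eq (N : ℕ) :
    {v : List Bool | (∃ w : List Bool, w ≠ [] ∧ v = w ++ w) ∧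
      ∃ j, 1 ≤ j ∧ j ≤ N ∧ OccursD v j} = (fun p : ℕ × ℕ => sqW p.1 p.2) '' Domain N := by
  ext v
  constructor
  · rintro ⟨⟨w, hw, rfl⟩, j, hj1, hjN, hocc⟩
    obtain ⟨e, o, h1, h2, h3⟩ := occ_square hw hocc
    exact ⟨(e, o), ⟨h1, le_trans h2 hjN⟩, h3.symm⟩
  · rintro ⟨⟨e, o⟩, ⟨h1, h2⟩, rfl⟩
    have h1' : o < 2^e := h1
    have h2' : 2^(e+1)+o+1 ≤ N := h2
    obtain ⟨w, hw, hsq⟩ := sqW_is_square h1'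
    exact ⟨⟨w, hw, hsq⟩, 2^(e+1)+o+1, by omega, h2', sqW_occurs h1'⟩

lemma cb_set_eq (N : ℕ) :
    {v : List Bool | (∃ w : List Bool, w ≠ [] ∧ v = w ++ w ++ w) ∧
      ∃ j, 1 ≤ j ∧ j ≤ N ∧ OccursD v j} = (fun p : ℕ × ℕ => cbW p.1 p.2) '' Domain N := by
  ext v
  constructor
  · rintro ⟨⟨w, hw, rfl⟩, j, hj1, hjN, hocc⟩
    obtain ⟨e, o, h1, h2, h3⟩ := occ_cube hw hocc
    exact ⟨(e, o), ⟨h1, le_trans h2 hjN⟩, h3.symm⟩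
  · rintro ⟨⟨e, o⟩, ⟨h1, h2⟩, rfl⟩
    have h1' : o < 2^e := h1
    have h2' : 2^(e+1)+o+1 ≤ N := h2
    obtain ⟨w, hw, hcb⟩ := cbW_is_cube h1'
    exact ⟨⟨w, hw, hcb⟩, 2^(e+1)+o+1, by omega, h2', cbW_occurs h1'⟩

lemma sq_injOn (N : ℕ) : Set.InjOn (fun p : ℕ × ℕ => sqW p.1 p.2) (Domain N) := by
  rintro ⟨e1, o1⟩ ⟨h1, _⟩ ⟨e2, o2⟩ ⟨h2, _⟩ h
  obtain ⟨he, ho⟩ := sqW_inj h1 h2 h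
  simp only [Prod.mk.injEq]
  exact ⟨he, ho⟩

lemma cb_injOn (N : ℕ) : Set.InjOn (fun p : ℕ × ℕ => cbW p.1 p.2) (Domain N) := by
  rintro ⟨e1, o1⟩ ⟨h1, _⟩ ⟨e2, o2⟩ ⟨h2, _⟩ h
  obtain ⟨he, ho⟩ := cbW_inj h1 h2 h
  simp only [Prod.mk.injEq]
  exact ⟨he, ho⟩

lemma sq_ncard (N : ℕ) :
    ({v : List Bool | (∃ w : List Bool, w ≠ [] ∧ v = w ++ w) ∧
      ∃ j, 1 ≤ j ∧ j ≤ N ∧ OccursD v j}).ncard = (Domain N).ncard := by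
  rw [sq_set_eq N, Set.ncard_image_of_injOn (sq_injOn N)]

lemma cb_ncard (N : ℕ) :
    ({v : List Bool | (∃ w : List Bool, w ≠ [] ∧ v = w ++ w ++ w) ∧
      ∃ j, 1 ≤ j ∧ j ≤ N ∧ OccursD v j}).ncard = (Domain N).ncard := by
  rw [cb_set_eq N, Set.ncard_image_of_injOn (cb_injOn N)]

lemma uniq_aux {a b n : ℕ} (ha2 : n < 3*2^a) (hb1 : 2^(b+1) ≤ n) (hab : a < b) : False := by
  have h1 : (3:ℕ)*2^a < 2^(a+2) := by
    have := hpow_pos a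
    have : (2:ℕ)^(a+2) = 4*2^a := by ring
    omega
  have h2 : (2:ℕ)^(a+2) ≤ 2^(b+1) := Nat.pow_le_pow_right (by norm_num) (by omega)
  omega

lemma uniq_e {a b n : ℕ} (ha1 : 2^(a+1) ≤ n) (ha2 : n < 3*2^a)
    (hb1 : 2^(b+1) ≤ n) (hb2 : n < 3*2^b) : a = b := by
  rcases lt_trichotomy a b with h | h | h
  · exact absurd (uniq_aux ha2 hb1 h) (by simp)
  · exact h
  · exact absurd (uniq_aux hb2 ha1 h) (by simp)

lemma domain_insert {N e : ℕ} (hm2 : 2^(e+1) ≤ N) (hm3 : N < 3*2^e) :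
    Domain (N+1) = insert (e, N - 2^(e+1)) (Domain N) := by
  have hpe : (2:ℕ)^(e+1) = 2*2^e := by ring
  ext ⟨a, b⟩
  simp only [Domain, Set.mem_insert_iff, Set.mem_setOf_eq, Prod.mk.injEq]
  constructor
  · rintro ⟨hb, hpos⟩
    rcases Nat.lt_or_ge (2^(a+1)+b+1) (N+1) with hlt | hge
    · right; exact ⟨hb, by omega⟩
    · left
      have hpa : (2:ℕ)^(a+1) = 2*2^a := by ring
      have ha : a = e := uniq_e (n := N) (by omega) (by omega) hm2 hm3
      subst ha
      exact ⟨rfl, by omega⟩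
  · rintro (⟨ha, hb⟩ | ⟨hb, hpos⟩)
    · subst ha; subst hb
      exact ⟨by omega, by omega⟩
    · exact ⟨hb, by omega⟩

lemma domain_eq {N : ℕ} (hno : ¬ ∃ m : ℕ, 1 ≤ m ∧ 2 ^ m ≤ N ∧ N < 3 * 2 ^ (m - 1)) :
    Domain (N+1) = Domain N := by
  ext ⟨a, b⟩
  simp only [Domain, Set.mem_setOf_eq]
  constructor
  · rintro ⟨hb, hpos⟩
    refine ⟨hb, ?_⟩
    rcases Nat.lt_or_ge (2^(a+1)+b+1) (N+1) with hlt | hge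
    · omega
    · exfalso
      apply hno
      refine ⟨a+1, by omega, by omega, ?_⟩
      have : a + 1 - 1 = a := by omega
      rw [this]
      have hpa : (2:ℕ)^(a+1) = 2*2^a := by ring
      omega
  · rintro ⟨hb, hpos⟩
    exact ⟨hb, by omega⟩

lemma domain_new_not_mem {N e : ℕ} (hm2 : 2^(e+1) ≤ N) :
    (e, N - 2^(e+1)) ∉ Domain N := by
  rintro ⟨_, hpos⟩
  simp only at hpos
  omega

theorem main_counting (N : ℕ) :
    ((∃ m : ℕ, 1 ≤ m ∧ 2 ^ m ≤ N ∧ N < 3 * 2 ^ (m - 1)) →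
      (Domain (N+1)).ncard = (Domain N).ncard + 1) ∧
    (¬ (∃ m : ℕ, 1 ≤ m ∧ 2 ^ m ≤ N ∧ N < 3 * 2 ^ (m - 1)) →
      (Domain (N+1)).ncard = (Domain N).ncard) := by
  constructor
  · rintro ⟨m, hm1, hm2, hm3⟩
    have hme : m = (m-1) + 1 := by omega
    rw [hme] at hm2
    have hm3' : N < 3 * 2^(m-1) := hm3
    rw [domain_insert hm2 hm3',
      Set.ncard_insert_of_notMem (domain_new_not_mem hm2) (Domain_finite N)]
  · intro hno
    rw [domain_eq hno]


end PD

open PD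
/-- `csq N`: the number of distinct squares `ww` (with `w` nonempty) having an
occurrence in the doubling sequence starting at some (1-indexed) position in
`{1, …, N}`. -/
noncomputable def csq (N : ℕ) : ℕ :=
  Set.ncard {v : List Bool |
    (∃ w : List Bool, w ≠ [] ∧ v = w ++ w) ∧ ∃ j, 1 ≤ j ∧ j ≤ N ∧ OccursD v j}

/-- `ccube N`: the number of distinct cubes `www` (with `w` nonempty) having an
occurrence in the doubling sequence starting at some position in `{1, …, N}`. -/
noncomputable def ccube (N : ℕ) : ℕ :=
  Set.ncard {v : List Bool |
    (∃ w : List Bool, w ≠ [] ∧ v = w ++ w ++ w) ∧ ∃ j, 1 ≤ j ∧ j ≤ N ∧ OccursD v j}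

/-- Counting squares and cubes: for every `N ≥ 1`, `c(N+1) − c(N) = 1` iff
`2^m ≤ N < 3·2^(m-1)` for some `m ≥ 1`, and `c(N+1) = c(N)` otherwise; moreover
the number of distinct cubes beginning in `D∞[1,N]` equals `c(N)` as well. -/
theorem doubling_count_squares (N : ℕ) (hN : 1 ≤ N) :
    ((∃ m : ℕ, 1 ≤ m ∧ 2 ^ m ≤ N ∧ N < 3 * 2 ^ (m - 1)) → csq (N + 1) = csq N + 1) ∧
      (¬ (∃ m : ℕ, 1 ≤ m ∧ 2 ^ m ≤ N ∧ N < 3 * 2 ^ (m - 1)) → csq (N + 1) = csq N) ∧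
      ccube N = csq N := by
  refine ⟨?_, ?_, ?_⟩
  · intro h
    show Set.ncard _ = Set.ncard _ + 1
    rw [PD.sq_ncard (N+1), PD.sq_ncard N]
    exact (PD.main_counting N).1 h
  · intro h
    show Set.ncard _ = Set.ncard _
    rw [PD.sq_ncard (N+1), PD.sq_ncard N]
    exact (PD.main_counting N).2 h
  · show Set.ncard _ = Set.ncard _
    rw [PD.cb_ncard N, PD.sq_ncard N]
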